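/- Let n be an integer with |n| ≥ 2, let 0 < a < b, let p > 1 and q = p/(p−1). Then | (a^n + b^n)/2 − (b^{n+1} − a^{n+1}) / ((n+1)(b − a)) | ≤ |n| · ((b − a)/3) · ( (a^{q(n−1)} + b^{q(n−1)})/2 )^{1/q}. Equivalently, |A(a^n, b^n) − L_n(a,b)^n| ≤ |n| ((b−a)/3) A(a^{q(n−1)}, b^{q(n−1)})^{1/q}. -/

import Mathlib

open Set intervalIntegral
open scoped Interval

/-- integral of a shifted linear product -/
lemma int_lin_shift (u v c d e : ℝ) :
    ∫ x in u..v, (x - c) * (d * x + e) =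
      d * (v^3 - u^3)/3 + (e - c*d) * (v^2 - u^2)/2 - c*e*(v - u) := by
  have h : (fun x : ℝ => (x - c) * (d * x + e)) =
      fun x : ℝ => d * x^2 + ((e - c*d) * x + (-(c*e))) := by
    funext x; ring
  have i1 : IntervalIntegrable (fun x : ℝ => d * x^2) MeasureTheory.volume u v :=
    (by fun_prop : Continuous fun x : ℝ => d * x^2).intervalIntegrable _ _
  have i2 : IntervalIntegrable (fun x : ℝ => (e - c*d) * x) MeasureTheory.volume u v :=
    (by fun_prop : Continuous fun x : ℝ => (e - c*d) * x).intervalIntegrable _ _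
  have i3 : IntervalIntegrable (fun x : ℝ => -(c*e)) MeasureTheory.volume u v :=
    intervalIntegrable_const
  rw [h, intervalIntegral.integral_add i1 (i2.add i3), intervalIntegral.integral_add i2 i3,
    intervalIntegral.integral_const_mul, intervalIntegral.integral_const_mul,
    integral_pow, integral_id, intervalIntegral.integral_const, smul_eq_mul]
  ring

/-- power mean step -/
lemma pm_step (x y q : ℝ) (hx : 0 ≤ x) (hy : 0 ≤ y) (hq : 1 < q) :
    (x + y) / 2 ≤ ((x ^ q + y ^ q) / 2) ^ (1/q) := by
  have hq0 : q ≠ 0 := by positivity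
  have h1 : ((x + y)/2) ^ q ≤ (x ^ q + y ^ q) / 2 := by
    have hc := (convexOn_rpow hq.le).2 (mem_Ici.2 hx) (mem_Ici.2 hy)
      (by norm_num : (0:ℝ) ≤ 1/2) (by norm_num : (0:ℝ) ≤ 1/2) (by norm_num)
    simpa [smul_eq_mul] using (by
      have := hc
      rw [smul_eq_mul, smul_eq_mul, smul_eq_mul, smul_eq_mul] at this
      calc ((x + y)/2) ^ q = (1/2 * x + 1/2 * y) ^ q := by ring_nf
        _ ≤ 1/2 * x ^ q + 1/2 * y ^ q := this
        _ = (x ^ q + y ^ q) / 2 := by ring)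
  calc (x + y)/2 = (((x + y)/2) ^ q) ^ (1/q) := by
        rw [← Real.rpow_mul (by positivity), mul_one_div_cancel hq0, Real.rpow_one]
    _ ≤ ((x ^ q + y ^ q) / 2) ^ (1/q) :=
        Real.rpow_le_rpow (by positivity) h1 (by positivity)

set_option maxHeartbeats 1000000 in
theorem arith_p_log_mean_estimate (n : ℤ) (a b p q : ℝ) (hn : 2 ≤ |n|)
    (ha : 0 < a) (hab : a < b) (hp : 1 < p) (hq : q = p / (p - 1)) :
    |(a ^ n + b ^ n) / 2 - (b ^ (n + 1) - a ^ (n + 1)) / (((n : ℝ) + 1) * (b - a))| ≤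
      |(n : ℝ)| * ((b - a) / 3) *
        ((a ^ (q * ((n : ℝ) - 1)) + b ^ (q * ((n : ℝ) - 1))) / 2) ^ (1 / q) := by
  have hb : 0 < b := ha.trans hab
  have hba : 0 < b - a := by linarith
  have hn0 : n ≠ 0 := by rintro rfl; simp at hn
  have hn1 : n ≠ -1 := by rintro rfl; simp at hn
  have hnR0 : (n : ℝ) ≠ 0 := Int.cast_ne_zero.2 hn0
  have hnR1 : (n : ℝ) + 1 ≠ 0 := by
    intro h
    exact hn1 (by exact_mod_cast (by linarith : (n:ℝ) = -1))
  have hmem : (0 : ℝ) ∉ [[a, b]] := by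
    rw [Set.uIcc_of_le hab.le, Set.mem_Icc]
    rintro ⟨h1, _⟩; linarith
  set m : ℝ := (a + b) / 2 with hm
  set x : ℝ := a ^ (n - 1) with hxdef
  set y : ℝ := b ^ (n - 1) with hydef
  have hx : 0 < x := zpow_pos ha _
  have hy : 0 < y := zpow_pos hb _
  set N : ℝ := |(n : ℝ)| with hN
  have hN0 : 0 ≤ N := abs_nonneg _
  -- Step 1: the integral identity
  have hsub : n - 1 + 1 = n := by ring
  have hcong : Set.EqOn (fun t : ℝ => (t - m) * ((n : ℝ) * t ^ (n - 1)))
      (fun t : ℝ => (n : ℝ) * t ^ n - (m * (n : ℝ)) * t ^ (n - 1)) [[a, b]] := by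
    intro t ht
    have ht0 : t ≠ 0 := by
      rw [Set.uIcc_of_le hab.le, Set.mem_Icc] at ht
      exact (ha.trans_le ht.1).ne'
    have h1 : t ^ n = t ^ (n - 1) * t := by rw [← zpow_add_one₀ ht0, hsub]
    simp only [h1]; ring
  have hE : (∫ t in a..b, (t - m) * ((n : ℝ) * t ^ (n - 1)))
      = (b - a) * ((a ^ n + b ^ n) / 2) - (b ^ (n + 1) - a ^ (n + 1)) / ((n : ℝ) + 1) := by
    rw [intervalIntegral.integral_congr hcong,
      intervalIntegral.integral_sub
        ((intervalIntegrable_zpow (Or.inr hmem)).const_mul _)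
        ((intervalIntegrable_zpow (Or.inr hmem)).const_mul _),
      intervalIntegral.integral_const_mul, intervalIntegral.integral_const_mul,
      integral_zpow (Or.inr ⟨hn1, hmem⟩),
      integral_zpow (Or.inr ⟨by omega, hmem⟩), hsub]
    have hA1 : a ^ (n + 1) = a ^ n * a := zpow_add_one₀ ha.ne' n
    have hB1 : b ^ (n + 1) = b ^ n * b := zpow_add_one₀ hb.ne' n
    rw [hA1, hB1]
    push_cast
    field_simp
    rw [hm]
    field_simp
    have hninv : (n : ℝ) * (n : ℝ)⁻¹ = 1 := mul_inv_cancel₀ hnR0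
    linear_combination (1 + (n : ℝ)) * (-(b ^ n * b) - b ^ n * a + b * a ^ n + a ^ n * a) * hninv
  -- Step 2: pointwise convexity bound
  have hconv : ∀ t ∈ Set.Icc a b, t ^ (n - 1) * (b - a) ≤ (b - t) * x + (t - a) * y := by
    intro t ht
    obtain ⟨h1, h2⟩ := ht
    have hw1 : (0:ℝ) ≤ (b - t) / (b - a) := div_nonneg (by linarith) hba.le
    have hw2 : (0:ℝ) ≤ (t - a) / (b - a) := by
      apply div_nonneg (by linarith) hba.le
    have hws : (b - t) / (b - a) + (t - a) / (b - a) = 1 := by field_simp; ring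
    have hcomb : ((b - t) / (b - a)) • a + ((t - a) / (b - a)) • b = t := by
      field_simp
      have hne : -a + b ≠ 0 := by intro h; linarith
      have hinv : (-a + b) * (-a + b)⁻¹ = 1 := mul_inv_cancel₀ hne
      linear_combination t * hinv
    have := (convexOn_zpow (n - 1)).2 (Set.mem_Ioi.2 ha) (Set.mem_Ioi.2 hb) hw1 hw2 hws
    rw [hcomb] at this
    rw [smul_eq_mul, smul_eq_mul] at this
    calc t ^ (n - 1) * (b - a) ≤ ((b - t) / (b - a) * x + (t - a) / (b - a) * y) * (b - a) := by
          apply mul_le_mul_of_nonneg_right this hba.le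
      _ = (b - t) * x + (t - a) * y := by field_simp
  -- Step 3: compute the majorant integral
  set d : ℝ := y - x with hd
  set e : ℝ := b * x - a * y with he
  have hG : ∀ t : ℝ, d * t + e = (b - t) * x + (t - a) * y := by intro t; rw [hd, he]; ring
  have ham : a ≤ m := by rw [hm]; linarith
  have hmb : m ≤ b := by rw [hm]; linarith
  have hcong1 : Set.EqOn (fun t : ℝ => |t - m| * (d * t + e))
      (fun t : ℝ => -((t - m) * (d * t + e))) [[a, m]] := by
    intro t ht
    rw [Set.uIcc_of_le ham, Set.mem_Icc] at ht
    have h1 : |t - m| = -(t - m) := abs_of_nonpos (by linarith [ht.2])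
    simp only [h1]; ring
  have hcong2 : Set.EqOn (fun t : ℝ => |t - m| * (d * t + e))
      (fun t : ℝ => (t - m) * (d * t + e)) [[m, b]] := by
    intro t ht
    rw [Set.uIcc_of_le hmb, Set.mem_Icc] at ht
    have h1 : |t - m| = t - m := abs_of_nonneg (by linarith [ht.1])
    simp only [h1]
  have hT : (∫ t in a..b, |t - m| * (d * t + e)) = (b - a)^3 * (x + y) / 8 := by
    have hi : ∀ u v : ℝ, IntervalIntegrable (fun t : ℝ => |t - m| * (d * t + e))
        MeasureTheory.volume u v := fun u v =>
      (((continuous_id.sub continuous_const).abs).mul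
        ((continuous_const.mul continuous_id).add continuous_const)).intervalIntegrable _ _
    rw [← intervalIntegral.integral_add_adjacent_intervals (hi a m) (hi m b),
      intervalIntegral.integral_congr hcong1, intervalIntegral.integral_congr hcong2,
      intervalIntegral.integral_neg, int_lin_shift, int_lin_shift, hm, hd, he]
    field_simp
    ring
  have hR : (∫ t in a..b, N / (b - a) * (|t - m| * (d * t + e)))
      = N * (b - a)^2 * (x + y) / 8 := by
    rw [intervalIntegral.integral_const_mul, hT]
    field_simp
  -- Step 4: monotonicity of integrals
  have hsubset : [[a, b]] ⊆ ({0}ᶜ : Set ℝ) := by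
    intro t ht
    rw [Set.uIcc_of_le hab.le, Set.mem_Icc] at ht
    simp only [Set.mem_compl_iff, Set.mem_singleton_iff]
    exact (ha.trans_le ht.1).ne'
  have hco : ContinuousOn (fun t : ℝ => (t - m) * ((n:ℝ) * t ^ (n - 1))) [[a, b]] :=
    (continuousOn_id.sub continuousOn_const).mul
      (continuousOn_const.mul ((continuousOn_zpow₀ (n - 1)).mono hsubset))
  have hmono : (∫ t in a..b, |(t - m) * ((n:ℝ) * t ^ (n - 1))|)
      ≤ ∫ t in a..b, N / (b - a) * (|t - m| * (d * t + e)) := by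
    apply intervalIntegral.integral_mono_on hab.le (hco.abs.intervalIntegrable)
      ((continuous_const.mul (((continuous_id.sub continuous_const).abs).mul
        ((continuous_const.mul continuous_id).add continuous_const))).intervalIntegrable _ _)
    intro t ht
    have htpos : 0 < t := ha.trans_le ht.1
    have htz : 0 < t ^ (n - 1) := zpow_pos htpos _
    have h1 : t ^ (n - 1) * (b - a) ≤ d * t + e := by rw [hG]; exact hconv t ht
    have h2 : t ^ (n - 1) ≤ (d * t + e) / (b - a) := (le_div_iff₀ hba).2 h1
    rw [abs_mul, abs_mul, abs_of_pos htz]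
    calc |t - m| * (|(n:ℝ)| * t ^ (n - 1)) ≤ |t - m| * (|(n:ℝ)| * ((d * t + e) / (b - a))) :=
          mul_le_mul_of_nonneg_left (mul_le_mul_of_nonneg_left h2 hN0) (abs_nonneg _)
      _ = N / (b - a) * (|t - m| * (d * t + e)) := by rw [hN]; ring
  have habs : |∫ t in a..b, (t - m) * ((n:ℝ) * t ^ (n - 1))|
      ≤ N * (b - a)^2 * (x + y) / 8 :=
    calc |∫ t in a..b, (t - m) * ((n:ℝ) * t ^ (n - 1))|
        ≤ ∫ t in a..b, |(t - m) * ((n:ℝ) * t ^ (n - 1))| :=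
          intervalIntegral.abs_integral_le_integral_abs hab.le
      _ ≤ ∫ t in a..b, N / (b - a) * (|t - m| * (d * t + e)) := hmono
      _ = N * (b - a)^2 * (x + y) / 8 := hR
  -- Step 5: identify the LHS
  have hfin : |(a ^ n + b ^ n) / 2 - (b ^ (n + 1) - a ^ (n + 1)) / (((n : ℝ) + 1) * (b - a))| * (b - a)
      ≤ N * (b - a)^2 * (x + y) / 8 := by
    have e1 : |(a ^ n + b ^ n) / 2 - (b ^ (n + 1) - a ^ (n + 1)) / (((n : ℝ) + 1) * (b - a))| * (b - a)
        = |((a ^ n + b ^ n) / 2 - (b ^ (n + 1) - a ^ (n + 1)) / (((n : ℝ) + 1) * (b - a))) * (b - a)| := by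
      rw [abs_mul, abs_of_pos hba]
    have e2 : ((a ^ n + b ^ n) / 2 - (b ^ (n + 1) - a ^ (n + 1)) / (((n : ℝ) + 1) * (b - a))) * (b - a)
        = (b - a) * ((a ^ n + b ^ n) / 2) - (b ^ (n + 1) - a ^ (n + 1)) / ((n : ℝ) + 1) := by
      field_simp
    rw [e1, e2, ← hE]
    exact habs
  have h8 : |(a ^ n + b ^ n) / 2 - (b ^ (n + 1) - a ^ (n + 1)) / (((n : ℝ) + 1) * (b - a))|
      ≤ N * (b - a) * (x + y) / 8 := by
    rw [← mul_le_mul_iff_of_pos_right hba]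
    calc |(a ^ n + b ^ n) / 2 - (b ^ (n + 1) - a ^ (n + 1)) / (((n : ℝ) + 1) * (b - a))| * (b - a)
        ≤ N * (b - a)^2 * (x + y) / 8 := hfin
      _ = N * (b - a) * (x + y) / 8 * (b - a) := by ring
  -- Step 6: power mean
  have hq1 : 1 < q := by
    rw [hq, lt_div_iff₀ (by linarith)]
    linarith
  have hcast : ((n:ℝ) - 1) = ((n - 1 : ℤ) : ℝ) := by push_cast; ring
  have hax : a ^ (q * ((n:ℝ) - 1)) = x ^ q := by
    rw [mul_comm, Real.rpow_mul ha.le, hcast, Real.rpow_intCast, hxdef]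
  have hbx : b ^ (q * ((n:ℝ) - 1)) = y ^ q := by
    rw [mul_comm, Real.rpow_mul hb.le, hcast, Real.rpow_intCast, hydef]
  have hM : (x + y) / 2 ≤ ((a ^ (q * ((n:ℝ) - 1)) + b ^ (q * ((n:ℝ) - 1))) / 2) ^ (1/q) := by
    rw [hax, hbx]
    exact pm_step x y q hx.le hy.le hq1
  have hxy : (0:ℝ) ≤ x + y := by positivity
  calc |(a ^ n + b ^ n) / 2 - (b ^ (n + 1) - a ^ (n + 1)) / (((n : ℝ) + 1) * (b - a))|
      ≤ N * (b - a) * (x + y) / 8 := h8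
    _ ≤ N * ((b - a) / 3) * ((x + y) / 2) := by nlinarith [mul_nonneg (mul_nonneg hN0 hba.le) hxy]
    _ ≤ N * ((b - a) / 3) * ((a ^ (q * ((n:ℝ) - 1)) + b ^ (q * ((n:ℝ) - 1))) / 2) ^ (1/q) := by
        apply mul_le_mul_of_nonneg_left hM (by positivity)
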